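/- Let G₁, G₂ ∈ ℂ^{2×2} be Hermitian positive definite. The function f(P) = p₁* G₁ p₁ + p₂* G₂ p₂ − log |det P|², where P = [p₁, p₂]* ∈ GL(2, ℂ), is bounded below, and its infimum over GL(2, ℂ) is attained. -/

import Mathlib

open Matrix
open scoped ComplexOrder

/-- Smallest-eigenvalue style lower bound for a 2×2 positive definite Hermitian form. -/
lemma stmt11_quad_lb (G : Matrix (Fin 2) (Fin 2) ℂ) (hG : G.PosDef) :
    ∃ c > 0, ∀ x : Fin 2 → ℂ,
      c * (∑ i, ‖x i‖ ^ 2) ≤ (x ⬝ᵥ G.mulVec (star x)).re := by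
  set ψ : (Fin 2 → ℂ) → ℝ := fun x => (x ⬝ᵥ G.mulVec (star x)).re with hψdef
  have hψc : Continuous ψ :=
    Complex.continuous_re.comp
      (Continuous.dotProduct continuous_id
        (continuous_const.matrix_mulVec continuous_star))
  set s : (Fin 2 → ℂ) → ℝ := fun x => ∑ i, ‖x i‖ ^ 2 with hsdef
  have hsc : Continuous s :=
    continuous_finset_sum _ fun i _ => (continuous_norm.comp (continuous_apply i)).pow 2
  have hψpos : ∀ x : Fin 2 → ℂ, x ≠ 0 → 0 < ψ x := by
    intro x hx
    have h := hG.re_dotProduct_pos (x := star x) (by simpa using star_ne_zero.mpr hx)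
    rwa [star_star] at h
  set S : Set (Fin 2 → ℂ) := {x | s x = 1} with hSdef
  have hSclosed : IsClosed S := isClosed_eq hsc continuous_const
  have hSbdd : Bornology.IsBounded S := by
    apply (Metric.isBounded_closedBall (x := (0 : Fin 2 → ℂ)) (r := 1)).subset
    intro x hx
    rw [Metric.mem_closedBall, dist_zero_right, pi_norm_le_iff_of_nonneg zero_le_one]
    intro i
    have h1 : ‖x i‖ ^ 2 ≤ 1 := by
      have h2 := Finset.single_le_sum (f := fun j => ‖x j‖ ^ 2)
        (fun j _ => sq_nonneg _) (Finset.mem_univ i)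
      have h3 : s x = 1 := hx
      calc ‖x i‖ ^ 2 ≤ s x := h2
        _ = 1 := h3
    nlinarith [norm_nonneg (x i)]
  have hScomp : IsCompact S := Metric.isCompact_of_isClosed_isBounded hSclosed hSbdd
  have hSne : S.Nonempty := ⟨![1, 0], by simp [hSdef, hsdef, Fin.sum_univ_two]⟩
  obtain ⟨u, huS, humin⟩ := hScomp.exists_isMinOn hSne hψc.continuousOn
  have hu0 : u ≠ 0 := by
    intro h
    have : s u = 1 := huS
    rw [h] at this
    simp [hsdef] at this
  refine ⟨ψ u, hψpos u hu0, ?_⟩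
  intro x
  by_cases hx : x = 0
  · simp [hx, hsdef, hψdef]
  · have hsx : 0 < s x := by
      obtain ⟨i, hi⟩ := Function.ne_iff.mp hx
      have h0 : 0 < ‖x i‖ ^ 2 := by
        have := norm_pos_iff.mpr hi
        positivity
      exact lt_of_lt_of_le h0 (Finset.single_le_sum (f := fun j => ‖x j‖ ^ 2)
        (fun j _ => sq_nonneg _) (Finset.mem_univ i))
    set t : ℝ := Real.sqrt (s x) with htdef
    have ht : 0 < t := Real.sqrt_pos.mpr hsx
    have ht2 : t ^ 2 = s x := Real.sq_sqrt hsx.le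
    set u' : Fin 2 → ℂ := ((t : ℂ))⁻¹ • x with hu'def
    have hstar : star ((t : ℂ))⁻¹ = ((t : ℂ))⁻¹ := by
      simp [Complex.star_def, ← map_inv₀, Complex.conj_ofReal]
    have habs : ∀ i, ‖(t : ℂ)⁻¹ * x i‖ ^ 2 = (t ^ 2)⁻¹ * ‖x i‖ ^ 2 := by
      intro i
      rw [norm_mul, norm_inv, Complex.norm_real, Real.norm_eq_abs, abs_of_pos ht, mul_pow, inv_pow]
    have hsu' : s u' = 1 := by
      simp only [hsdef, hu'def, Pi.smul_apply, smul_eq_mul, habs, ← Finset.mul_sum]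
      rw [ht2]
      exact inv_mul_cancel₀ hsx.ne'
    have hmin : ψ u ≤ ψ u' := humin hsu'
    have hψu' : ψ u' = t⁻¹ ^ 2 * ψ x := by
      simp only [hψdef, hu'def, star_smul, hstar, smul_dotProduct, dotProduct_smul,
        mulVec_smul, smul_eq_mul]
      ring_nf
      rw [show ((t : ℂ))⁻¹ ^ 2 = ((t⁻¹ ^ 2 : ℝ) : ℂ) from by push_cast; ring,
        Complex.re_ofReal_mul]
    rw [hψu'] at hmin
    have h2 : ψ u * t ^ 2 ≤ t⁻¹ ^ 2 * ψ x * t ^ 2 := mul_le_mul_of_nonneg_right hmin (sq_nonneg t)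
    have h3 : t⁻¹ ^ 2 * ψ x * t ^ 2 = ψ x := by
      field_simp
    rw [h3, ht2] at h2
    linarith

lemma stmt11_hadamard (P : Matrix (Fin 2) (Fin 2) ℂ) :
    ‖P.det‖ ^ 2 ≤
      (∑ j, ‖P 0 j‖ ^ 2) * (∑ j, ‖P 1 j‖ ^ 2) := by
  rw [Matrix.det_fin_two]
  simp only [Fin.sum_univ_two]
  set a := ‖P 0 0‖
  set b := ‖P 0 1‖
  set c := ‖P 1 0‖
  set d := ‖P 1 1‖
  have ha : 0 ≤ a := norm_nonneg _
  have hb : 0 ≤ b := norm_nonneg _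
  have hc : 0 ≤ c := norm_nonneg _
  have hd : 0 ≤ d := norm_nonneg _
  have habs : ‖P 0 0 * P 1 1 - P 0 1 * P 1 0‖ ≤ a * d + b * c := by
    calc ‖P 0 0 * P 1 1 - P 0 1 * P 1 0‖
        ≤ ‖P 0 0 * P 1 1‖ + ‖P 0 1 * P 1 0‖ :=
          (norm_sub_le _ _)
      _ = a * d + b * c := by rw [norm_mul, norm_mul]
  have h0 : 0 ≤ ‖P 0 0 * P 1 1 - P 0 1 * P 1 0‖ := norm_nonneg _
  nlinarith [sq_nonneg (a * c - b * d)]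

lemma stmt11_log_le (a t : ℝ) (ha : 0 < a) (ht : 0 < t) :
    Real.log t ≤ a * t - 1 - Real.log a := by
  have h := Real.log_le_sub_one_of_pos (mul_pos ha ht)
  rw [Real.log_mul ha.ne' ht.ne'] at h
  linarith

/-- For 2×2 Hermitian positive definite `G₁, G₂`, the function
`f(P) = p₁* G₁ p₁ + p₂* G₂ p₂ − log |det P|²` (rows of `P` are `p₁*, p₂*`)
is bounded below on `GL(2, ℂ)` and its infimum there is attained. -/
theorem stmt11 (G₁ G₂ : Matrix (Fin 2) (Fin 2) ℂ) (h₁ : G₁.PosDef) (h₂ : G₂.PosDef) :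
    let f : Matrix (Fin 2) (Fin 2) ℂ → ℝ := fun P =>
      (P 0 ⬝ᵥ G₁.mulVec (star (P 0))).re + (P 1 ⬝ᵥ G₂.mulVec (star (P 1))).re -
        Real.log (‖P.det‖ ^ 2)
    BddBelow (f '' {P | IsUnit P}) ∧
      ∃ P₀ : Matrix (Fin 2) (Fin 2) ℂ, IsUnit P₀ ∧ ∀ P, IsUnit P → f P₀ ≤ f P := by
  intro f
  obtain ⟨c₁, hc₁, hq₁⟩ := stmt11_quad_lb G₁ h₁
  obtain ⟨c₂, hc₂, hq₂⟩ := stmt11_quad_lb G₂ h₂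
  set c : ℝ := min c₁ c₂ with hcdef
  have hc0 : 0 < c := lt_min hc₁ hc₂
  set s : (Fin 2 → ℂ) → ℝ := fun x => ∑ i, ‖x i‖ ^ 2 with hsdef
  have hs0 : ∀ x, 0 ≤ s x := fun x => Finset.sum_nonneg fun i _ => sq_nonneg _
  -- lower bounds on the quadratic parts
  have hq : ∀ P : Matrix (Fin 2) (Fin 2) ℂ,
      c * s (P 0) + c * s (P 1) ≤
        (P 0 ⬝ᵥ G₁.mulVec (star (P 0))).re + (P 1 ⬝ᵥ G₂.mulVec (star (P 1))).re := by
    intro P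
    have ha := hq₁ (P 0)
    have hb := hq₂ (P 1)
    have h1 : c * s (P 0) ≤ c₁ * s (P 0) :=
      mul_le_mul_of_nonneg_right (min_le_left _ _) (hs0 _)
    have h2 : c * s (P 1) ≤ c₂ * s (P 1) :=
      mul_le_mul_of_nonneg_right (min_le_right _ _) (hs0 _)
    linarith
  have hqnn : ∀ P : Matrix (Fin 2) (Fin 2) ℂ,
      0 ≤ (P 0 ⬝ᵥ G₁.mulVec (star (P 0))).re + (P 1 ⬝ᵥ G₂.mulVec (star (P 1))).re := by
    intro P
    have := hq P
    nlinarith [hs0 (P 0), hs0 (P 1), hc0.le]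
  -- positivity of row norms for invertible P
  have hrowpos : ∀ P : Matrix (Fin 2) (Fin 2) ℂ, IsUnit P → ∀ i, 0 < s (P i) := by
    intro P hP i
    rcases (hs0 (P i)).lt_or_eq with h | h
    · exact h
    · exfalso
      have hrow : ∀ j, P i j = 0 := by
        intro j
        have hz := (Finset.sum_eq_zero_iff_of_nonneg (fun j _ => sq_nonneg (‖P i j‖))).mp
          h.symm j (Finset.mem_univ j)
        have := pow_eq_zero_iff (n := 2) (by norm_num) |>.mp hz
        exact norm_eq_zero.mp this
      have : P.det = 0 := Matrix.det_eq_zero_of_row_eq_zero i hrow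
      have hd : IsUnit P.det := P.isUnit_iff_isUnit_det.mp hP
      rw [this] at hd
      exact hd.ne_zero rfl
  have hdetpos : ∀ P : Matrix (Fin 2) (Fin 2) ℂ, IsUnit P → 0 < ‖P.det‖ ^ 2 := by
    intro P hP
    have hd : P.det ≠ 0 := by
      intro h
      have hd := P.isUnit_iff_isUnit_det.mp hP
      rw [h] at hd; exact hd.ne_zero rfl
    exact pow_pos (norm_pos_iff.mpr hd) 2
  -- the key coercive lower bound for f
  set B : ℝ := 2 + 2 * Real.log (c / 2) with hBdef
  have hlow : ∀ P, IsUnit P → c / 2 * (s (P 0) + s (P 1)) + B ≤ f P := by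
    intro P hP
    have h0 : 0 < s (P 0) := hrowpos P hP 0
    have h1 : 0 < s (P 1) := hrowpos P hP 1
    have hdet : 0 < ‖P.det‖ ^ 2 := hdetpos P hP
    have hhad : ‖P.det‖ ^ 2 ≤ s (P 0) * s (P 1) := stmt11_hadamard P
    have hlog : Real.log (‖P.det‖ ^ 2) ≤ Real.log (s (P 0)) + Real.log (s (P 1)) := by
      calc Real.log (‖P.det‖ ^ 2) ≤ Real.log (s (P 0) * s (P 1)) :=
            Real.log_le_log hdet hhad
        _ = Real.log (s (P 0)) + Real.log (s (P 1)) := Real.log_mul h0.ne' h1.ne'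
    have hl0 : Real.log (s (P 0)) ≤ c / 2 * s (P 0) - 1 - Real.log (c / 2) :=
      stmt11_log_le _ _ (by linarith) h0
    have hl1 : Real.log (s (P 1)) ≤ c / 2 * s (P 1) - 1 - Real.log (c / 2) :=
      stmt11_log_le _ _ (by linarith) h1
    have hquad := hq P
    simp only [f]
    have hch : c / 2 * s (P 0) + c / 2 * s (P 1) ≤ c * s (P 0) + c * s (P 1) := by
      nlinarith
    linarith
  set M : ℝ := f 1 with hMdef
  set ε : ℝ := min (Real.exp (-M)) 1 with hεdef
  have hε0 : 0 < ε := lt_min (Real.exp_pos _) one_pos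
  set r : ℝ := Real.sqrt (max 1 ((M - B) / (c / 2))) with hrdef
  have hr1 : 1 ≤ r := by
    have h := Real.sqrt_le_sqrt (le_max_left 1 ((M - B) / (c / 2)))
    rwa [Real.sqrt_one] at h
  have hr0 : 0 ≤ r := le_trans zero_le_one hr1
  set K : Set (Matrix (Fin 2) (Fin 2) ℂ) :=
    {P | ε ≤ ‖P.det‖ ^ 2 ∧ ∀ i j, ‖P i j‖ ≤ r} with hKdef
  -- membership of sublevel sets in K
  have hmemK : ∀ P, IsUnit P → f P ≤ M → P ∈ K := by
    intro P hP hfP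
    constructor
    · -- determinant bound
      have hdet : 0 < ‖P.det‖ ^ 2 := hdetpos P hP
      have h1 : -Real.log (‖P.det‖ ^ 2) ≤ f P := by
        have := hqnn P
        simp only [f]
        linarith
      have h2 : -M ≤ Real.log (‖P.det‖ ^ 2) := by linarith
      have h3 : Real.exp (-M) ≤ ‖P.det‖ ^ 2 := by
        calc Real.exp (-M) ≤ Real.exp (Real.log (‖P.det‖ ^ 2)) := Real.exp_le_exp.mpr h2
          _ = ‖P.det‖ ^ 2 := Real.exp_log hdet
      exact le_trans (min_le_left _ _) h3
    · -- norm bound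
      have hsum : s (P 0) + s (P 1) ≤ (M - B) / (c / 2) := by
        have := hlow P hP
        rw [le_div_iff₀ (by linarith : (0:ℝ) < c / 2), mul_comm]
        exact le_sub_iff_add_le.mpr (le_trans this hfP)
      intro i j
      have hrowle : ∀ i : Fin 2, s (P i) ≤ s (P 0) + s (P 1) :=
        Fin.forall_fin_two.mpr ⟨by linarith [hs0 (P 1)], by linarith [hs0 (P 0)]⟩
      have hij : ‖P i j‖ ^ 2 ≤ s (P 0) + s (P 1) := by
        have hsingle : ‖P i j‖ ^ 2 ≤ s (P i) :=
          Finset.single_le_sum (f := fun k => ‖P i k‖ ^ 2)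
            (fun k _ => sq_nonneg _) (Finset.mem_univ j)
        exact le_trans hsingle (hrowle i)
      have : ‖P i j‖ ^ 2 ≤ max 1 ((M - B) / (c / 2)) :=
        le_trans hij (le_trans hsum (le_max_right _ _))
      rw [hrdef]
      calc ‖P i j‖ = Real.sqrt (‖P i j‖ ^ 2) :=
            (Real.sqrt_sq (norm_nonneg _)).symm
        _ ≤ Real.sqrt (max 1 ((M - B) / (c / 2))) := Real.sqrt_le_sqrt this
  -- K is compact
  have hdetcont : Continuous fun P : Matrix (Fin 2) (Fin 2) ℂ => ‖P.det‖ ^ 2 :=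
    (continuous_norm.comp continuous_id.matrix_det).pow 2
  have hKclosed : IsClosed K := by
    have hKeq : K = {P : Matrix (Fin 2) (Fin 2) ℂ | ε ≤ ‖P.det‖ ^ 2} ∩
        ⋂ i, ⋂ j, {P : Matrix (Fin 2) (Fin 2) ℂ | ‖P i j‖ ≤ r} := by
      ext P
      simp [hKdef, Set.mem_iInter, Set.mem_inter_iff]
    rw [hKeq]
    exact (isClosed_le continuous_const hdetcont).inter
      (isClosed_iInter fun i => isClosed_iInter fun j =>
        isClosed_le (continuous_norm.comp
          ((continuous_apply j).comp (continuous_apply i))) continuous_const)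
  have hCcomp : IsCompact (Set.univ.pi fun _ : Fin 2 =>
      Set.univ.pi fun _ : Fin 2 => Metric.closedBall (0 : ℂ) r) :=
    isCompact_univ_pi fun _ => isCompact_univ_pi fun _ => isCompact_closedBall _ _
  have hKsub : K ⊆ Set.univ.pi fun _ : Fin 2 =>
      Set.univ.pi fun _ : Fin 2 => Metric.closedBall (0 : ℂ) r := by
    intro P hP
    refine Set.mem_univ_pi.mpr ?_
    intro i
    rw [Set.mem_univ_pi]
    intro j
    rw [Metric.mem_closedBall, dist_zero_right]
    exact hP.2 i j
  have hKcomp : IsCompact K := hCcomp.of_isClosed_subset hKclosed hKsub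
  -- 1 ∈ K
  have h1K : (1 : Matrix (Fin 2) (Fin 2) ℂ) ∈ K := by
    constructor
    · simp only [Matrix.det_one]
      rw [norm_one, one_pow]
      exact min_le_right _ _
    · intro i j
      rw [Matrix.one_apply]
      split
      · simpa using hr1
      · simpa using hr0
  -- f is continuous on K
  have hq1c : Continuous fun P : Matrix (Fin 2) (Fin 2) ℂ => (P 0 ⬝ᵥ G₁.mulVec (star (P 0))).re :=
    Complex.continuous_re.comp
      ((continuous_apply (0 : Fin 2)).dotProduct
        (continuous_const.matrix_mulVec (continuous_star.comp (continuous_apply (0 : Fin 2)))))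
  have hq2c : Continuous fun P : Matrix (Fin 2) (Fin 2) ℂ => (P 1 ⬝ᵥ G₂.mulVec (star (P 1))).re :=
    Complex.continuous_re.comp
      ((continuous_apply (1 : Fin 2)).dotProduct
        (continuous_const.matrix_mulVec (continuous_star.comp (continuous_apply (1 : Fin 2)))))
  have hlogc : ContinuousOn (fun P : Matrix (Fin 2) (Fin 2) ℂ =>
      Real.log (‖P.det‖ ^ 2)) K :=
    ContinuousOn.log hdetcont.continuousOn fun P hP => ne_of_gt (lt_of_lt_of_le hε0 hP.1)
  have hfK : ContinuousOn f K := ((hq1c.add hq2c).continuousOn).sub hlogc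
  -- minimize over K
  obtain ⟨P₀, hP₀K, hP₀min⟩ := hKcomp.exists_isMinOn ⟨1, h1K⟩ hfK
  have hP₀unit : IsUnit P₀ := by
    rw [Matrix.isUnit_iff_isUnit_det, isUnit_iff_ne_zero]
    intro h
    have := hP₀K.1
    rw [h] at this
    simp at this
    linarith
  have hmain : ∀ P, IsUnit P → f P₀ ≤ f P := by
    intro P hP
    by_cases hfP : f P ≤ M
    · exact hP₀min (hmemK P hP hfP)
    · push_neg at hfP
      have h1 : f P₀ ≤ f 1 := hP₀min h1K
      rw [← hMdef] at h1
      linarith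
  exact ⟨⟨f P₀, by rintro y ⟨P, hP, rfl⟩; exact hmain P hP⟩, P₀, hP₀unit, hmain⟩
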